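/- Let φ_a(δ,θ,η) = -θ³/3 + θ(δ - 2η₀η) with |δ| ≤ 1 and 0 < η₀ < 1. If c₀ ≥ √(32/15) and |θ| ≥ c₀(1+|η|^{1/2}), then |∂_θ φ_a(δ,θ,η)| = |θ² + 2η₀η - δ| ≥ (1 - 2/c₀²)θ². -/
import Mathlib


theorem airy_phase_gradient_lower_bound (η₀ δ η : ℝ)
    (hη₀ : 0 < η₀ ∧ η₀ < 1) (hδ : |δ| ≤ 1)
    (c₀ : ℝ) (hc₀ : Real.sqrt (32 / 15) ≤ c₀) :
    ∀ θ : ℝ, c₀ * (1 + Real.sqrt |η|) ≤ |θ| →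
      (1 - 2 / c₀ ^ 2) * θ ^ 2 ≤ |θ ^ 2 + 2 * η₀ * η - δ| := by
  obtain ⟨h1, h2⟩ := hη₀
  intro θ hθ
  have hc : 0 < c₀ :=
    lt_of_lt_of_le (Real.sqrt_pos.mpr (by norm_num)) hc₀
  have hc2 : 0 < c₀ ^ 2 := by positivity
  have hsq : Real.sqrt |η| ^ 2 = |η| := Real.sq_sqrt (abs_nonneg η)
  have h0 : 0 ≤ Real.sqrt |η| := Real.sqrt_nonneg _
  have hθ2 : c₀ ^ 2 * (1 + |η|) ≤ θ ^ 2 := by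
    have h4 : c₀ * (1 + Real.sqrt |η|) ≤ |θ| := hθ
    nlinarith [sq_abs θ, abs_nonneg θ, mul_nonneg hc.le h0, sq_nonneg (Real.sqrt |η|)]
  have hdiv : 2 * (1 + |η|) ≤ 2 / c₀ ^ 2 * θ ^ 2 := by
    rw [div_mul_eq_mul_div, le_div_iff₀ hc2]
    nlinarith
  have hd := abs_le.mp hδ
  have key : (1 - 2 / c₀ ^ 2) * θ ^ 2 ≤ θ ^ 2 + 2 * η₀ * η - δ := by
    nlinarith [abs_nonneg η, neg_abs_le η, mul_nonneg h1.le (abs_nonneg η),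
      mul_nonneg (sub_nonneg.mpr h2.le) (by linarith [neg_abs_le η] : (0:ℝ) ≤ η + |η|)]
  exact key.trans (le_abs_self _)
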